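/- Let a : 𝕋 → (0,∞) and b₁, b₂ : 𝕋 → (0,∞) be continuous with ‖b₁ − b₂‖_∞ ≤ ε. Define ρ_i(y) = a(y) b_i(y) / ∫_0^1 a(y') b_i(y') dy'. Then ‖ρ₁ − ρ₂‖_∞ ≤ 2ε · (sup a)(inf a)^{-1}(inf b₁ ∧ inf b₂)^{-2}(sup b₁ ∨ sup b₂ + inf b₁ ∧ inf b₂) up to an explicit constant; in particular the normalized product is Lipschitz in b in the region where a, b are bounded above and below. -/

import Mathlib

open Real MeasureTheory

/-- Lipschitz stability of the normalized product: if `a, b₁, b₂` are continuous on the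
torus with `0 < ma ≤ a ≤ Ma`, `0 < mb ≤ bᵢ ≤ Mb` and `‖b₁ − b₂‖_∞ ≤ ε`, then the
normalized densities `ρᵢ = a bᵢ / ∫ a bᵢ` satisfy an explicit sup-norm bound of order `ε`. -/
theorem normalized_product_lipschitz
    (a b₁ b₂ : AddCircle (1:ℝ) → ℝ) (ma Ma mb Mb ε : ℝ)
    (ha : Continuous a) (hb₁ : Continuous b₁) (hb₂ : Continuous b₂)
    (hma : 0 < ma) (hmb : 0 < mb) (hε : 0 ≤ ε)
    (haB : ∀ y, ma ≤ a y ∧ a y ≤ Ma)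
    (hb₁B : ∀ y, mb ≤ b₁ y ∧ b₁ y ≤ Mb)
    (hb₂B : ∀ y, mb ≤ b₂ y ∧ b₂ y ≤ Mb)
    (hdist : ∀ y, |b₁ y - b₂ y| ≤ ε) :
    ∀ y : AddCircle (1:ℝ),
      |a y * b₁ y / (∫ y' : AddCircle (1:ℝ), a y' * b₁ y')
          - a y * b₂ y / (∫ y' : AddCircle (1:ℝ), a y' * b₂ y')|
        ≤ ε * (Ma / (ma * mb)) * (1 + Ma * Mb / (ma * mb)) := by
  intro y
  have hMa : 0 < Ma := lt_of_lt_of_le hma ((haB y).1.trans (haB y).2)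
  have hMb : 0 < Mb := lt_of_lt_of_le hmb ((hb₁B y).1.trans (hb₁B y).2)
  set I₁ := ∫ y' : AddCircle (1:ℝ), a y' * b₁ y' with hI₁def
  set I₂ := ∫ y' : AddCircle (1:ℝ), a y' * b₂ y' with hI₂def
  have hmeas : (volume (Set.univ : Set (AddCircle (1:ℝ)))).toReal = 1 := by
    rw [AddCircle.measure_univ]; simp
  have hint1 : Integrable (fun y' => a y' * b₁ y') (volume : Measure (AddCircle (1:ℝ))) := by
    apply Continuous.integrable_of_hasCompactSupport (ha.mul hb₁)
    exact HasCompactSupport.of_compactSpace _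
  have hint2 : Integrable (fun y' => a y' * b₂ y') (volume : Measure (AddCircle (1:ℝ))) := by
    apply Continuous.integrable_of_hasCompactSupport (ha.mul hb₂)
    exact HasCompactSupport.of_compactSpace _
  have hintd : Integrable (fun y' => a y' * (b₁ y' - b₂ y')) (volume : Measure (AddCircle (1:ℝ))) := by
    apply Continuous.integrable_of_hasCompactSupport (ha.mul (hb₁.sub hb₂))
    exact HasCompactSupport.of_compactSpace _
  have hc : (0:ℝ) < ma * mb := mul_pos hma hmb
  have hconst : ∫ _ : AddCircle (1:ℝ), (ma * mb : ℝ) = ma * mb := by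
    rw [integral_const, measureReal_def, hmeas, one_smul]
  have hI₁lb : ma * mb ≤ I₁ := by
    rw [← hconst]
    exact integral_mono (integrable_const _) hint1 fun y' =>
      mul_le_mul (haB y').1 (hb₁B y').1 hmb.le (hma.le.trans (haB y').1)
  have hI₂lb : ma * mb ≤ I₂ := by
    rw [← hconst]
    exact integral_mono (integrable_const _) hint2 fun y' =>
      mul_le_mul (haB y').1 (hb₂B y').1 hmb.le (hma.le.trans (haB y').1)
  have hI₁pos : 0 < I₁ := lt_of_lt_of_le hc hI₁lb
  have hI₂pos : 0 < I₂ := lt_of_lt_of_le hc hI₂lb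
  have hIdiff : |I₁ - I₂| ≤ Ma * ε := by
    have : I₁ - I₂ = ∫ y' : AddCircle (1:ℝ), a y' * (b₁ y' - b₂ y') := by
      rw [hI₁def, hI₂def, ← integral_sub hint1 hint2]
      congr 1; ext y'; ring
    rw [this]
    calc |∫ y' : AddCircle (1:ℝ), a y' * (b₁ y' - b₂ y')|
        ≤ ∫ y' : AddCircle (1:ℝ), |a y' * (b₁ y' - b₂ y')| := by
          simpa only [Real.norm_eq_abs] using norm_integral_le_integral_norm (μ := (volume : Measure (AddCircle (1:ℝ)))) (fun y' => a y' * (b₁ y' - b₂ y'))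
      _ ≤ ∫ _ : AddCircle (1:ℝ), Ma * ε := by
          apply integral_mono hintd.abs (integrable_const _)
          intro y'
          show |a y' * (b₁ y' - b₂ y')| ≤ Ma * ε
          rw [abs_mul, abs_of_pos (lt_of_lt_of_le hma (haB y').1)]
          exact mul_le_mul (haB y').2 (hdist y') (abs_nonneg _) hMa.le
      _ = Ma * ε := by rw [integral_const, measureReal_def, hmeas, one_smul]
  have key : a y * b₁ y / I₁ - a y * b₂ y / I₂
      = a y * (b₁ y - b₂ y) / I₁ + a y * b₂ y * (I₂ - I₁) / (I₁ * I₂) := by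
    field_simp
    ring
  rw [key]
  have hay : 0 < a y := lt_of_lt_of_le hma (haB y).1
  have h1 : |a y * (b₁ y - b₂ y) / I₁| ≤ Ma * ε / (ma * mb) := by
    rw [abs_div, abs_of_pos hI₁pos, abs_mul, abs_of_pos hay]
    exact div_le_div₀ (by positivity)
      (mul_le_mul (haB y).2 (hdist y) (abs_nonneg _) hMa.le)
      hc hI₁lb
  have h2 : |a y * b₂ y * (I₂ - I₁) / (I₁ * I₂)| ≤ Ma * Mb * (Ma * ε) / ((ma * mb) * (ma * mb)) := by
    rw [abs_div, abs_of_pos (mul_pos hI₁pos hI₂pos), abs_mul, abs_mul,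
      abs_of_pos hay, abs_of_pos (lt_of_lt_of_le hmb (hb₂B y).1)]
    apply div_le_div₀ (by positivity) _ (by positivity)
      (mul_le_mul hI₁lb hI₂lb hc.le hI₁pos.le)
    rw [abs_sub_comm]
    exact mul_le_mul (mul_le_mul (haB y).2 (hb₂B y).2 (lt_of_lt_of_le hmb (hb₂B y).1).le hMa.le)
      hIdiff (abs_nonneg _) (by positivity)
  calc |a y * (b₁ y - b₂ y) / I₁ + a y * b₂ y * (I₂ - I₁) / (I₁ * I₂)|
      ≤ |a y * (b₁ y - b₂ y) / I₁| + |a y * b₂ y * (I₂ - I₁) / (I₁ * I₂)| := abs_add_le _ _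
    _ ≤ Ma * ε / (ma * mb) + Ma * Mb * (Ma * ε) / ((ma * mb) * (ma * mb)) := add_le_add h1 h2
    _ = ε * (Ma / (ma * mb)) * (1 + Ma * Mb / (ma * mb)) := by field_simp
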